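/- For α ∈ (1, 2) define G(α) := ∫_0^{1/2} ((1−u)^{−α} − 1)·u^{−α} du − 2^{α−1}/(α−1). Then G(α) < 0 for every α ∈ (1, 3/2), G(3/2) = 0, and G(α) > 0 for every α ∈ (3/2, 2). -/

import Mathlib

open MeasureTheory Filter Set intervalIntegral

-- bounds on s(u) = (1-u)^(1-α) - 1
lemma s_bounds {α u : ℝ} (h1 : 1 < α) (h2 : α < 2) (hu : 0 < u) (hu2 : u ≤ 1/2) :
    0 ≤ (1-u)^(1-α) - 1 ∧ (1-u)^(1-α) - 1 ≤ 2*u := by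
  have hv : (0:ℝ) < 1 - u := by linarith
  have hv1 : 1 - u ≤ 1 := by linarith
  have hvh : (1:ℝ)/2 ≤ 1 - u := by linarith
  constructor
  · have h0 : (1-u) ^ (0:ℝ) ≤ (1-u)^(1-α) :=
      Real.rpow_le_rpow_of_exponent_ge hv hv1 (by linarith)
    rw [Real.rpow_zero] at h0; linarith
  · have hA : (1-u)^(1-α) ≤ 2 := by
      have h1' : (1-u)^(1-α) ≤ ((1:ℝ)/2)^(1-α) :=
        Real.rpow_le_rpow_of_nonpos (by norm_num) hvh (by linarith)
      have h2' : ((1:ℝ)/2)^(1-α) = (2:ℝ)^(α-1) := by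
        rw [one_div, ← Real.rpow_neg_one (2:ℝ), ← Real.rpow_mul (by norm_num)]
        ring_nf
      have h3' : (2:ℝ)^(α-1) ≤ (2:ℝ)^(1:ℝ) :=
        Real.rpow_le_rpow_of_exponent_le one_le_two (by linarith)
      rw [Real.rpow_one] at h3'
      linarith [h2' ▸ h1']
    have hB : (1-u) ≤ (1-u)^(α-1) := by
      have := Real.rpow_le_rpow_of_exponent_ge hv hv1 (show α - 1 ≤ 1 by linarith)
      rwa [Real.rpow_one] at this
    have hC : (1-u)^(1-α) * (1-u)^(α-1) = 1 := by
      rw [← Real.rpow_add hv]; norm_num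
    have hE : (1-u)^(α-1) ≤ 1 := Real.rpow_le_one hv.le hv1 (by linarith)
    have hD : 0 ≤ (1-u)^(1-α) := Real.rpow_nonneg hv.le _
    nlinarith [mul_le_mul_of_nonneg_right hA (by linarith : 0 ≤ 1 - (1-u)^(α-1))]

lemma cont_one_sub_rpow (c : ℝ) :
    ContinuousOn (fun u : ℝ => (1-u) ^ c) (Icc 0 (1/2)) := by
  apply ContinuousOn.rpow_const (by fun_prop)
  intro x hx
  exact Or.inl (by simp only [mem_Icc] at hx; nlinarith [hx.2])

lemma int_k (α c : ℝ) (h1 : 1 < α) (h2 : α < 2) :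
    IntervalIntegrable (fun u : ℝ => (u^(1-α) - (1-u)^(1-α)) * (1-u)^c)
      volume 0 (1/2) := by
  have huI : uIcc (0:ℝ) (1/2) = Icc 0 (1/2) := uIcc_of_le (by norm_num)
  apply IntervalIntegrable.mul_continuousOn
  · exact (intervalIntegrable_rpow' (by linarith)).sub
      ((huI ▸ cont_one_sub_rpow (1-α)).intervalIntegrable)
  · exact huI ▸ cont_one_sub_rpow c

lemma int_T2 (α c : ℝ) (h1 : 1 < α) (h2 : α < 2) :
    IntervalIntegrable (fun u : ℝ => u^(1-α) * (1-u)^c) volume 0 (1/2) := by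
  have huI : uIcc (0:ℝ) (1/2) = Icc 0 (1/2) := uIcc_of_le (by norm_num)
  exact (intervalIntegrable_rpow' (by linarith)).mul_continuousOn
    (huI ▸ cont_one_sub_rpow c)

lemma int_W (α : ℝ) (h1 : 1 < α) (h2 : α < 2) :
    IntervalIntegrable (fun u : ℝ => ((1-u)^(-α) - 1) * u^(-α)
      - 2*((u^(1-α) - (1-u)^(1-α)) * (1-u)^(-α))) volume 0 (1/2) := by
  rw [intervalIntegrable_iff_integrableOn_Ioc_of_le (by norm_num)]
  have hT1 : IntegrableOn (fun u : ℝ => u^(-α) * ((1-u)^(1-α) - 1))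
      (Ioc 0 (1/2)) volume := by
    apply Integrable.mono' (g := fun u : ℝ => 2 * u^(1-α))
    · exact (intervalIntegrable_iff_integrableOn_Ioc_of_le (by norm_num : (0:ℝ) ≤ 1/2)).mp
        ((intervalIntegrable_rpow' (a := 0) (b := 1/2) (show (-1:ℝ) < 1-α by linarith)).const_mul 2)
    · apply ContinuousOn.aestronglyMeasurable _ measurableSet_Ioc
      apply ContinuousOn.mul
      · exact ContinuousOn.rpow_const (by fun_prop) (fun x hx => Or.inl hx.1.ne')
      · exact (ContinuousOn.rpow_const (by fun_prop)
          (fun x hx => Or.inl (by nlinarith [hx.2] : (1:ℝ)-x ≠ 0))).sub continuousOn_const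
    · rw [ae_restrict_iff' measurableSet_Ioc]
      filter_upwards with u hu
      obtain ⟨hs0, hs2⟩ := s_bounds h1 h2 hu.1 hu.2
      have hX : 0 ≤ u^(-α) := Real.rpow_nonneg hu.1.le _
      have hXu : u^(-α) * u = u^(1-α) := by
        rw [show (1:ℝ)-α = -α+1 by ring, Real.rpow_add hu.1, Real.rpow_one]
      rw [Real.norm_eq_abs, abs_of_nonneg (mul_nonneg hX hs0)]
      nlinarith [mul_le_mul_of_nonneg_left hs2 hX]
  have hT2 : IntegrableOn (fun u : ℝ => u^(1-α) * (1-u)^(-α)) (Ioc 0 (1/2)) volume :=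
    (intervalIntegrable_iff_integrableOn_Ioc_of_le (by norm_num)).mp (int_T2 α (-α) h1 h2)
  have hT3 : IntegrableOn (fun u : ℝ => 2*(1-u)^(1-2*α)) (Ioc 0 (1/2)) volume :=
    ((continuousOn_const.mul (cont_one_sub_rpow (1-2*α))).integrableOn_compact
      isCompact_Icc).mono_set Ioc_subset_Icc_self
  have hC : IntegrableOn (fun u : ℝ => (u^(-α) * ((1-u)^(1-α) - 1)
      - u^(1-α) * (1-u)^(-α)) + 2*(1-u)^(1-2*α)) (Ioc 0 (1/2)) volume :=
    (hT1.sub hT2).add hT3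
  apply hC.congr_fun _ measurableSet_Ioc
  intro u hu
  have hu1 : (0:ℝ) < 1 - u := by have := hu.2; linarith [hu.2]
  have e1 : u^(1-α) = u * u^(-α) := by
    rw [show (1:ℝ)-α = -α+1 by ring, Real.rpow_add hu.1, Real.rpow_one]; ring
  have e2 : (1-u)^(1-α) = (1-u) * (1-u)^(-α) := by
    rw [show (1:ℝ)-α = -α+1 by ring, Real.rpow_add hu1, Real.rpow_one]; ring
  have e3 : (1-u)^(1-2*α) = (1-u) * ((1-u)^(-α) * (1-u)^(-α)) := by
    rw [show (1:ℝ)-2*α = -α+(-α)+1 by ring, Real.rpow_add hu1, Real.rpow_add hu1,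
      Real.rpow_one]; ring
  simp only [e1, e2, e3]; ring

lemma ftc1 (α : ℝ) (h1 : 1 < α) (h2 : α < 2) :
    ∫ u in (0:ℝ)..(1/2), (((1-u)^(-α) - 1) * u^(-α)
      - 2*((u^(1-α) - (1-u)^(1-α)) * (1-u)^(-α)))
      = 2^(α-1)/(α-1) - 1/(α-1) := by
  have hne : (1:ℝ) - α ≠ 0 := by intro h; linarith [h]
  have hne' : α - 1 ≠ 0 := by intro h; linarith [h]
  set H : ℝ → ℝ := fun u => (u^(1-α) * ((1-u)^(1-α) - 1) - (1-u)^(2-2*α)) / (1-α)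
    with hHdef
  apply integral_eq_sub_of_hasDerivAt_of_tendsto (f := H) (by norm_num)
  · -- derivative
    intro u hu
    obtain ⟨hu0, hu2⟩ := hu
    have hv : (0:ℝ) < 1 - u := by linarith
    have d1 : HasDerivAt (fun x : ℝ => x^(1-α)) ((1-α) * u^(1-α-1)) u :=
      Real.hasDerivAt_rpow_const (Or.inl hu0.ne')
    have dm : HasDerivAt (fun x : ℝ => 1-x) (-1) u := (hasDerivAt_id u).const_sub 1
    have d2 : HasDerivAt (fun x : ℝ => (1-x)^(1-α)) ((1-α) * (1-u)^(1-α-1) * (-1)) u :=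
      (Real.hasDerivAt_rpow_const (p := 1-α) (Or.inl hv.ne')).comp u dm
    have d3 : HasDerivAt (fun x : ℝ => (1-x)^(2-2*α)) ((2-2*α) * (1-u)^(2-2*α-1) * (-1)) u :=
      (Real.hasDerivAt_rpow_const (p := 2-2*α) (Or.inl hv.ne')).comp u dm
    have d : HasDerivAt H
        (((1-α) * u^(1-α-1) * ((1-u)^(1-α) - 1)
          + u^(1-α) * ((1-α) * (1-u)^(1-α-1) * (-1))
          - (2-2*α) * (1-u)^(2-2*α-1) * (-1)) / (1-α)) u :=
      ((d1.mul (d2.sub_const 1)).sub d3).div_const (1-α)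
    refine d.congr_deriv ?_
    have e1 : u^(1-α) = u * u^(-α) := by
      rw [show (1:ℝ)-α = -α+1 by ring, Real.rpow_add hu0, Real.rpow_one]; ring
    have e2 : u^(1-α-1) = u^(-α) := by rw [show (1:ℝ)-α-1 = -α by ring]
    have e3 : (1-u)^(1-α) = (1-u) * (1-u)^(-α) := by
      rw [show (1:ℝ)-α = -α+1 by ring, Real.rpow_add hv, Real.rpow_one]; ring
    have e4 : (1-u)^(1-α-1) = (1-u)^(-α) := by rw [show (1:ℝ)-α-1 = -α by ring]
    have e5 : (1-u)^(2-2*α-1) = (1-u) * ((1-u)^(-α) * (1-u)^(-α)) := by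
      rw [show (2:ℝ)-2*α-1 = -α+(-α)+1 by ring, Real.rpow_add hv, Real.rpow_add hv,
        Real.rpow_one]; ring
    rw [e1, e2, e3, e4, e5]
    field_simp
    ring
  · -- integrability
    exact int_W α h1 h2
  · -- limit at 0+
    have hT : Tendsto (fun u : ℝ => u^(1-α) * ((1-u)^(1-α) - 1)) (nhdsWithin 0 (Ioi 0))
        (nhds 0) := by
      apply squeeze_zero' (g := fun u : ℝ => 2 * u^(2-α))
      · filter_upwards [Ioo_mem_nhdsGT_of_mem (by norm_num : (0:ℝ) ∈ Ico 0 (1/2))]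
          with u hu
        exact mul_nonneg (Real.rpow_nonneg hu.1.le _) (s_bounds h1 h2 hu.1 hu.2.le).1
      · filter_upwards [Ioo_mem_nhdsGT_of_mem (by norm_num : (0:ℝ) ∈ Ico 0 (1/2))]
          with u hu
        have e : u^(1-α) * u = u^(2-α) := by
          rw [show (2:ℝ)-α = 1-α+1 by ring, Real.rpow_add hu.1, Real.rpow_one]
        nlinarith [mul_le_mul_of_nonneg_left (s_bounds h1 h2 hu.1 hu.2.le).2
          (Real.rpow_nonneg hu.1.le (1-α))]
      · have := (Real.continuousAt_rpow_const 0 (2-α) (Or.inr (by linarith))).tendsto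
        rw [Real.zero_rpow (by intro h; linarith [h] : (2:ℝ)-α ≠ 0)] at this
        simpa using (this.mono_left nhdsWithin_le_nhds).const_mul 2
    have hB : Tendsto (fun u : ℝ => (1-u)^(2-2*α)) (nhdsWithin 0 (Ioi 0)) (nhds 1) := by
      have hc : ContinuousAt (fun u : ℝ => (1-u)^(2-2*α)) 0 :=
        ContinuousAt.rpow_const (by fun_prop) (Or.inl (by norm_num))
      have h : Tendsto (fun u : ℝ => (1-u)^(2-2*α)) (nhdsWithin 0 (Ioi 0))
          (nhds ((1-0:ℝ)^(2-2*α))) := hc.tendsto.mono_left nhdsWithin_le_nhds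
      norm_num [Real.one_rpow] at h
      exact h
    have := (hT.sub hB).div_const (1-α)
    convert this using 2
    rw [zero_sub, div_eq_div_iff hne' hne]; ring
  · -- limit at 1/2-
    have hc : ContinuousAt H (1/2) := by
      apply ContinuousAt.div_const
      apply ContinuousAt.sub
      · exact (Real.continuousAt_rpow_const _ _ (Or.inl (by norm_num))).mul
          ((ContinuousAt.rpow_const (by fun_prop) (Or.inl (by norm_num))).sub
            continuousAt_const)
      · exact ContinuousAt.rpow_const (by fun_prop) (Or.inl (by norm_num))
    have hval : H (1/2) = 2^(α-1)/(α-1) := by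
      have eh : ((1:ℝ)/2)^(1-α) = (2:ℝ)^(α-1) := by
        rw [one_div, ← Real.rpow_neg_one (2:ℝ), ← Real.rpow_mul (by norm_num)]
        ring_nf
      have eh2 : ((1:ℝ)/2)^(2-2*α) = (2:ℝ)^(α-1) * (2:ℝ)^(α-1) := by
        rw [one_div, ← Real.rpow_neg_one (2:ℝ), ← Real.rpow_mul (by norm_num),
          ← Real.rpow_add (by norm_num)]
        ring_nf
      rw [hHdef]
      norm_num [eh, eh2]
      rw [div_eq_div_iff hne hne']
      ring
    rw [← hval]
    exact hc.tendsto.mono_left nhdsWithin_le_nhds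

lemma ftc2 (α : ℝ) (h1 : 1 < α) (h2 : α < 2) :
    ∫ u in (0:ℝ)..(1/2), (u^(1-α) - (1-u)^(1-α)) * (1-u)^(α-3)
      = 1/(2-α) - 1 := by
  have hne : (2:ℝ) - α ≠ 0 := by intro h; linarith [h]
  set P : ℝ → ℝ := fun u => u^(2-α) * (1-u)^(α-2) / (2-α) - (1-u)^(-1:ℝ) with hPdef
  have : ((1:ℝ)/(2-α) - 2) - (-1) = 1/(2-α) - 1 := by ring
  rw [← this]
  apply integral_eq_sub_of_hasDerivAt_of_tendsto (f := P) (by norm_num)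
  · intro u hu
    obtain ⟨hu0, hu2⟩ := hu
    have hv : (0:ℝ) < 1 - u := by linarith
    have d1 : HasDerivAt (fun x : ℝ => x^(2-α)) ((2-α) * u^(2-α-1)) u :=
      Real.hasDerivAt_rpow_const (Or.inl hu0.ne')
    have dm : HasDerivAt (fun x : ℝ => 1-x) (-1) u := (hasDerivAt_id u).const_sub 1
    have d2 : HasDerivAt (fun x : ℝ => (1-x)^(α-2)) ((α-2) * (1-u)^(α-2-1) * (-1)) u :=
      (Real.hasDerivAt_rpow_const (p := α-2) (Or.inl hv.ne')).comp u dm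
    have d3 : HasDerivAt (fun x : ℝ => (1-x)^(-1:ℝ)) ((-1) * (1-u)^(-1-1:ℝ) * (-1)) u :=
      (Real.hasDerivAt_rpow_const (p := (-1:ℝ)) (Or.inl hv.ne')).comp u dm
    have d : HasDerivAt P
        (((2-α) * u^(2-α-1) * (1-u)^(α-2) + u^(2-α) * ((α-2) * (1-u)^(α-2-1) * (-1))) / (2-α)
          - (-1) * (1-u)^(-1-1:ℝ) * (-1)) u :=
      ((d1.mul d2).div_const (2-α)).sub d3
    refine d.congr_deriv ?_
    have e1 : u^(2-α) = u * u^(1-α) := by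
      rw [show (2:ℝ)-α = 1-α+1 by ring, Real.rpow_add hu0, Real.rpow_one]; ring
    have e2 : u^(2-α-1) = u^(1-α) := by rw [show (2:ℝ)-α-1 = 1-α by ring]
    have e3 : (1-u)^(α-2) = (1-u) * (1-u)^(α-3) := by
      rw [show α-(2:ℝ) = α-3+1 by ring, Real.rpow_add hv, Real.rpow_one]; ring
    have e4 : (1-u)^(α-2-1) = (1-u)^(α-3) := by rw [show α-(2:ℝ)-1 = α-3 by ring]
    have e5 : (1-u)^(-1-1:ℝ) = (1-u)^(α-3) * (1-u)^(1-α) := by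
      rw [show (-1:ℝ)-1 = (α-3)+(1-α) by ring, Real.rpow_add hv]
    rw [e1, e2, e3, e4, e5]
    field_simp
    ring
  · exact int_k α (α-3) h1 h2
  · -- limit at 0+
    have hT : Tendsto (fun u : ℝ => u^(2-α)) (nhdsWithin 0 (Ioi 0)) (nhds 0) := by
      have := (Real.continuousAt_rpow_const 0 (2-α) (Or.inr (by linarith))).tendsto
      rw [Real.zero_rpow (by intro h; linarith [h] : (2:ℝ)-α ≠ 0)] at this
      exact this.mono_left nhdsWithin_le_nhds
    have hB : Tendsto (fun u : ℝ => (1-u)^(α-2)) (nhdsWithin 0 (Ioi 0)) (nhds 1) := by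
      have hc : ContinuousAt (fun u : ℝ => (1-u)^(α-2)) 0 :=
        ContinuousAt.rpow_const (by fun_prop) (Or.inl (by norm_num))
      have h : Tendsto (fun u : ℝ => (1-u)^(α-2)) (nhdsWithin 0 (Ioi 0))
          (nhds ((1-0:ℝ)^(α-2))) := hc.tendsto.mono_left nhdsWithin_le_nhds
      norm_num [Real.one_rpow] at h
      exact h
    have hC : Tendsto (fun u : ℝ => (1-u)^(-1:ℝ)) (nhdsWithin 0 (Ioi 0)) (nhds 1) := by
      have hc : ContinuousAt (fun u : ℝ => (1-u)^(-1:ℝ)) 0 :=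
        ContinuousAt.rpow_const (by fun_prop) (Or.inl (by norm_num))
      have h : Tendsto (fun u : ℝ => (1-u)^(-1:ℝ)) (nhdsWithin 0 (Ioi 0))
          (nhds ((1-0:ℝ)^(-1:ℝ))) := hc.tendsto.mono_left nhdsWithin_le_nhds
      norm_num [Real.one_rpow] at h
      exact h
    have := ((hT.mul hB).div_const (2-α)).sub hC
    norm_num at this
    convert this using 2
  · -- limit at 1/2-
    have hc : ContinuousAt P (1/2) := by
      apply ContinuousAt.sub
      · exact ((Real.continuousAt_rpow_const _ _ (Or.inl (by norm_num))).mul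
          (ContinuousAt.rpow_const (by fun_prop) (Or.inl (by norm_num)))).div_const _
      · exact ContinuousAt.rpow_const (by fun_prop) (Or.inl (by norm_num))
    have hval : P (1/2) = 1/(2-α) - 2 := by
      have e : ((1:ℝ)/2)^(2-α) * ((1:ℝ)/2)^(α-2) = 1 := by
        rw [← Real.rpow_add (by norm_num)]; norm_num
      have e2 : ((1:ℝ)/2 : ℝ)^(-1:ℝ) = 2 := by
        rw [Real.rpow_neg_one]; norm_num
      rw [hPdef]
      norm_num
      rw [e]
      norm_num
    rw [← hval]
    exact hc.tendsto.mono_left nhdsWithin_le_nhds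

lemma Gval (α : ℝ) (h1 : 1 < α) (h2 : α < 2) :
    (∫ u in (0:ℝ)..(1/2 : ℝ), ((1 - u) ^ (-α) - 1) * u ^ (-α)) - 2 ^ (α - 1) / (α - 1)
      = 2 * (∫ u in (0:ℝ)..(1/2), (u^(1-α) - (1-u)^(1-α)) * (1-u)^(-α)) - 1/(α-1) := by
  have hk := int_k α (-α) h1 h2
  have hW := int_W α h1 h2
  have hsplit : (∫ u in (0:ℝ)..(1/2 : ℝ), ((1 - u) ^ (-α) - 1) * u ^ (-α))
      = (∫ u in (0:ℝ)..(1/2), (((1-u)^(-α) - 1) * u^(-α)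
          - 2*((u^(1-α) - (1-u)^(1-α)) * (1-u)^(-α))))
        + 2 * ∫ u in (0:ℝ)..(1/2), (u^(1-α) - (1-u)^(1-α)) * (1-u)^(-α) := by
    rw [← intervalIntegral.integral_const_mul,
      ← intervalIntegral.integral_add hW (hk.const_mul 2)]
    apply intervalIntegral.integral_congr
    intro u _
    ring
  rw [hsplit, ftc1 α h1 h2]
  ring

lemma cmp_gt (α : ℝ) (h1 : 3/2 < α) (h2 : α < 2) :
    (1:ℝ)/(2-α) - 1 < ∫ u in (0:ℝ)..(1/2), (u^(1-α) - (1-u)^(1-α)) * (1-u)^(-α) := by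
  have h1' : 1 < α := by linarith
  have hk := int_k α (-α) h1' h2
  have hk0 := int_k α (α-3) h1' h2
  have hpos : 0 < ∫ u in (0:ℝ)..(1/2), ((u^(1-α) - (1-u)^(1-α)) * (1-u)^(-α)
      - (u^(1-α) - (1-u)^(1-α)) * (1-u)^(α-3)) := by
    apply intervalIntegral_pos_of_pos_on (hk.sub hk0) _ (by norm_num)
    intro u hu
    have hv : (0:ℝ) < 1 - u := by linarith [hu.2]
    have hf1 : (1-u)^(1-α) < u^(1-α) :=
      Real.rpow_lt_rpow_of_neg hu.1 (by linarith [hu.2]) (by linarith)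
    have hf2 : (1-u)^(-α) - (1-u)^(α-3) > 0 := by
      have := Real.rpow_lt_rpow_of_exponent_gt hv (by linarith [hu.1]) (by linarith : -α < α-3)
      linarith
    rw [← mul_sub]
    exact mul_pos (by linarith) hf2
  rw [intervalIntegral.integral_sub hk hk0, ftc2 α h1' h2] at hpos
  linarith

lemma cmp_lt (α : ℝ) (h1 : 1 < α) (h2 : α < 3/2) :
    (∫ u in (0:ℝ)..(1/2), (u^(1-α) - (1-u)^(1-α)) * (1-u)^(-α)) < (1:ℝ)/(2-α) - 1 := by
  have h2' : α < 2 := by linarith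
  have hk := int_k α (-α) h1 h2'
  have hk0 := int_k α (α-3) h1 h2'
  have hpos : 0 < ∫ u in (0:ℝ)..(1/2), ((u^(1-α) - (1-u)^(1-α)) * (1-u)^(α-3)
      - (u^(1-α) - (1-u)^(1-α)) * (1-u)^(-α)) := by
    apply intervalIntegral_pos_of_pos_on (hk0.sub hk) _ (by norm_num)
    intro u hu
    have hv : (0:ℝ) < 1 - u := by linarith [hu.2]
    have hf1 : (1-u)^(1-α) < u^(1-α) :=
      Real.rpow_lt_rpow_of_neg hu.1 (by linarith [hu.2]) (by linarith)
    have hf2 : (1-u)^(α-3) - (1-u)^(-α) > 0 := by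
      have := Real.rpow_lt_rpow_of_exponent_gt hv (by linarith [hu.1]) (by linarith : α-3 < -α)
      linarith
    rw [← mul_sub]
    exact mul_pos (by linarith) hf2
  rw [intervalIntegral.integral_sub hk0 hk, ftc2 α h1 h2'] at hpos
  linarith

/-- Lemma 5.3 of the paper.
For `α ∈ (1,2)` let `G(α) := ∫₀^{1/2} ((1−u)^{−α} − 1)·u^{−α} du − 2^{α−1}/(α−1)`.
Then `G(α) < 0` for `α ∈ (1, 3/2)`, `G(3/2) = 0`, and `G(α) > 0` for `α ∈ (3/2, 2)`. -/
theorem stmt7 (G : ℝ → ℝ)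
    (hG : ∀ α : ℝ, G α =
      (∫ u in (0:ℝ)..(1/2 : ℝ), ((1 - u) ^ (-α) - 1) * u ^ (-α)) - 2 ^ (α - 1) / (α - 1)) :
    (∀ α : ℝ, 1 < α → α < 3 / 2 → G α < 0) ∧
    G (3 / 2) = 0 ∧
    (∀ α : ℝ, 3 / 2 < α → α < 2 → 0 < G α) := by
  refine ⟨fun α h1 h2 => ?_, ?_, fun α h1 h2 => ?_⟩
  · rw [hG α, Gval α h1 (by linarith)]
    have hc := cmp_lt α h1 h2
    have ha : (0:ℝ) < α - 1 := by linarith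
    have hb : (0:ℝ) < 2 - α := by linarith
    have key : 2 * ((1:ℝ)/(2-α) - 1) ≤ 1/(α-1) := by
      have e : 2 * ((1:ℝ)/(2-α) - 1) = (2*(α-1))/(2-α) := by field_simp; ring
      rw [e, div_le_div_iff₀ hb ha]
      nlinarith [mul_pos (by linarith : (0:ℝ) < α) (by linarith : (0:ℝ) < 3 - 2*α)]
    linarith
  · rw [hG (3/2), Gval (3/2) (by norm_num) (by norm_num)]
    have e : ∫ u in (0:ℝ)..(1/2), (u^(1-(3/2:ℝ)) - (1-u)^(1-(3/2:ℝ))) * (1-u)^(-(3/2:ℝ))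
        = ∫ u in (0:ℝ)..(1/2), (u^(1-(3/2:ℝ)) - (1-u)^(1-(3/2:ℝ))) * (1-u)^((3/2:ℝ)-3) := by
      norm_num
    rw [e, ftc2 (3/2) (by norm_num) (by norm_num)]
    norm_num
  · rw [hG α, Gval α (by linarith) h2]
    have hc := cmp_gt α h1 h2
    have ha : (0:ℝ) < α - 1 := by linarith
    have hb : (0:ℝ) < 2 - α := by linarith
    have key : 1/(α-1) ≤ 2 * ((1:ℝ)/(2-α) - 1) := by
      have e : 2 * ((1:ℝ)/(2-α) - 1) = (2*(α-1))/(2-α) := by field_simp; ring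
      rw [e, div_le_div_iff₀ ha hb]
      nlinarith [mul_pos (by linarith : (0:ℝ) < α) (by linarith : (0:ℝ) < 2*α - 3)]
    linarith
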